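/- Grothendieck's inequality: there exists a universal constant K such that for every n, every real matrix (a_{ij}) satisfying |Σ a_{ij} s_i t_j| ≤ 1 for all choices of signs s_i, t_j ∈ {-1,1}, and every family of unit vectors x_i, y_j in a real inner product space, one has |Σ a_{ij} ⟨x_i, y_j⟩| ≤ K. -/

import Mathlib

open Finset

noncomputable section



def sg (c : ℝ) : ℝ := if 0 ≤ c then 1 else -1

lemma sg_mul_self (c : ℝ) : sg c * c = |c| := by
  unfold sg; split <;> [rw [abs_of_nonneg ‹_›]; rw [abs_of_neg (lt_of_not_ge ‹_›)]] <;> ring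

lemma sg_sign (c : ℝ) : sg c = 1 ∨ sg c = -1 := by
  unfold sg; split <;> simp

def Hyp (n m : ℕ) (a : Fin n → Fin m → ℝ) : Prop :=
  ∀ (s : Fin n → ℝ) (t : Fin m → ℝ), (∀ i, s i = 1 ∨ s i = -1) →
    (∀ j, t j = 1 ∨ t j = -1) → |∑ i, ∑ j, a i j * s i * t j| ≤ 1

variable {n m : ℕ} {a : Fin n → Fin m → ℝ}

lemma hypA1 (ha : Hyp n m a) (s : Fin n → ℝ) (t : Fin m → ℝ)
    (hs : ∀ i, |s i| ≤ 1) (ht : ∀ j, t j = 1 ∨ t j = -1) :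
    |∑ i, ∑ j, a i j * s i * t j| ≤ 1 := by
  set c : Fin n → ℝ := fun i => ∑ j, a i j * t j with hc
  have h1 : ∀ i, ∑ j, a i j * s i * t j = s i * c i := by
    intro i; rw [hc, Finset.mul_sum]; exact Finset.sum_congr rfl fun j _ => by ring
  calc |∑ i, ∑ j, a i j * s i * t j| = |∑ i, s i * c i| := by simp_rw [h1]
    _ ≤ ∑ i, |s i * c i| := Finset.abs_sum_le_sum_abs _ _
    _ ≤ ∑ i, |c i| := by
        refine Finset.sum_le_sum fun i _ => ?_
        rw [abs_mul]
        exact mul_le_of_le_one_left (abs_nonneg _) (hs i)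
    _ = ∑ i, sg (c i) * c i := by simp_rw [sg_mul_self]
    _ = ∑ i, ∑ j, a i j * sg (c i) * t j := by
        refine Finset.sum_congr rfl fun i _ => ?_
        rw [hc, Finset.mul_sum]; exact Finset.sum_congr rfl fun j _ => by ring
    _ ≤ |∑ i, ∑ j, a i j * sg (c i) * t j| := le_abs_self _
    _ ≤ 1 := ha _ _ (fun i => sg_sign _) ht

lemma hypA (ha : Hyp n m a) (s : Fin n → ℝ) (t : Fin m → ℝ)
    (hs : ∀ i, |s i| ≤ 1) (ht : ∀ j, |t j| ≤ 1) :
    |∑ i, ∑ j, a i j * s i * t j| ≤ 1 := by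
  set c : Fin m → ℝ := fun j => ∑ i, a i j * s i with hc
  have h0 : ∑ i, ∑ j, a i j * s i * t j = ∑ j, t j * c j := by
    rw [Finset.sum_comm]
    refine Finset.sum_congr rfl fun j _ => ?_
    rw [hc, Finset.mul_sum]; exact Finset.sum_congr rfl fun i _ => by ring
  calc |∑ i, ∑ j, a i j * s i * t j| = |∑ j, t j * c j| := by rw [h0]
    _ ≤ ∑ j, |t j * c j| := Finset.abs_sum_le_sum_abs _ _
    _ ≤ ∑ j, |c j| := by
        refine Finset.sum_le_sum fun j _ => ?_
        rw [abs_mul]; exact mul_le_of_le_one_left (abs_nonneg _) (ht j)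
    _ = ∑ j, sg (c j) * c j := by simp_rw [sg_mul_self]
    _ = ∑ i, ∑ j, a i j * s i * sg (c j) := by
        rw [Finset.sum_comm]
        refine Finset.sum_congr rfl fun j _ => ?_
        rw [hc, Finset.mul_sum]; exact Finset.sum_congr rfl fun i _ => by ring
    _ ≤ |∑ i, ∑ j, a i j * s i * sg (c j)| := le_abs_self _
    _ ≤ 1 := hypA1 ha _ _ hs (fun j => sg_sign _)

lemma hypB (ha : Hyp n m a) (s : Fin n → ℝ) (t : Fin m → ℝ) {lam mu : ℝ}
    (hlam : 0 < lam) (hmu : 0 < mu)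
    (hs : ∀ i, |s i| ≤ lam) (ht : ∀ j, |t j| ≤ mu) :
    |∑ i, ∑ j, a i j * s i * t j| ≤ lam * mu := by
  have := hypA ha (fun i => s i / lam) (fun j => t j / mu)
    (fun i => by rw [abs_div, abs_of_pos hlam]; exact (div_le_one hlam).2 (hs i))
    (fun j => by rw [abs_div, abs_of_pos hmu]; exact (div_le_one hmu).2 (ht j))
  have h2 : ∑ i, ∑ j, a i j * (s i / lam) * (t j / mu)
      = (∑ i, ∑ j, a i j * s i * t j) / (lam * mu) := by
    rw [Finset.sum_div]
    refine Finset.sum_congr rfl fun i _ => ?_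
    rw [Finset.sum_div]
    exact Finset.sum_congr rfl fun j _ => by field_simp
  rw [h2, abs_div, abs_of_pos (mul_pos hlam hmu), div_le_one (mul_pos hlam hmu)] at this
  exact this




def Rb (b : Bool) : ℝ := if b then 1 else -1

lemma Rb_sq (b : Bool) : Rb b * Rb b = 1 := by cases b <;> simp [Rb]

lemma Rb_not (b : Bool) : Rb (!b) = - Rb b := by cases b <;> simp [Rb]

lemma abs_Rb (b : Bool) : |Rb b| = 1 := by cases b <;> simp [Rb]

/-- flip coordinate k -/
def flip' {d : ℕ} (k : Fin d) : (Fin d → Bool) ≃ (Fin d → Bool) where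
  toFun ω := Function.update ω k (!(ω k))
  invFun ω := Function.update ω k (!(ω k))
  left_inv ω := by
    funext i
    by_cases h : i = k
    · subst h; simp [Function.update_self]
    · simp [Function.update_of_ne h]
  right_inv ω := by
    funext i
    by_cases h : i = k
    · subst h; simp [Function.update_self]
    · simp [Function.update_of_ne h]

lemma char_orth {d : ℕ} {k l : Fin d} (h : k ≠ l) :
    ∑ ω : Fin d → Bool, Rb (ω k) * Rb (ω l) = 0 := by
  have h1 : ∑ ω : Fin d → Bool, Rb (ω k) * Rb (ω l)
      = ∑ ω : Fin d → Bool, Rb ((flip' k) ω k) * Rb ((flip' k) ω l) :=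
    (Fintype.sum_equiv (flip' k) _ _ (fun ω => rfl)).symm
  have h2 : ∀ ω : Fin d → Bool,
      Rb ((flip' k) ω k) * Rb ((flip' k) ω l) = -(Rb (ω k) * Rb (ω l)) := by
    intro ω
    have hk : (flip' k) ω k = !(ω k) := Function.update_self _ _ _
    have hl : (flip' k) ω l = ω l := Function.update_of_ne (Ne.symm h) _ _
    rw [hk, hl, Rb_not]; ring
  simp_rw [h2] at h1
  rw [Finset.sum_neg_distrib] at h1
  linarith [h1]

lemma char_diag {d : ℕ} (k : Fin d) :
    ∑ ω : Fin d → Bool, Rb (ω k) * Rb (ω k) = 2 ^ d := by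
  simp_rw [Rb_sq]
  rw [Finset.sum_const, Finset.card_univ, Fintype.card_fun]
  simp

def rad {d : ℕ} (x : Fin d → ℝ) (ω : Fin d → Bool) : ℝ := ∑ k, x k * Rb (ω k)

lemma rad_mul_rad {d : ℕ} (x y : Fin d → ℝ) :
    ∑ ω : Fin d → Bool, rad x ω * rad y ω = 2 ^ d * ∑ k, x k * y k := by
  have h1 : ∀ ω : Fin d → Bool, rad x ω * rad y ω
      = ∑ k, ∑ l, (x k * y l) * (Rb (ω k) * Rb (ω l)) := by
    intro ω
    rw [rad, rad, Finset.sum_mul_sum]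
    exact Finset.sum_congr rfl fun k _ => Finset.sum_congr rfl fun l _ => by ring
  simp_rw [h1]
  rw [Finset.sum_comm]
  have h2 : ∀ k : Fin d, ∑ ω : Fin d → Bool, ∑ l, (x k * y l) * (Rb (ω k) * Rb (ω l))
      = 2 ^ d * (x k * y k) := by
    intro k
    rw [Finset.sum_comm]
    have h3 : ∀ l : Fin d, ∑ ω : Fin d → Bool, (x k * y l) * (Rb (ω k) * Rb (ω l))
        = (x k * y l) * ∑ ω : Fin d → Bool, (Rb (ω k) * Rb (ω l)) := fun l =>
      (Finset.mul_sum _ _ _).symm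
    simp_rw [h3]
    rw [Finset.sum_eq_single k]
    · rw [char_diag]; ring
    · intro l _ hl
      rw [char_orth (Ne.symm hl), mul_zero]
    · intro h; exact absurd (Finset.mem_univ k) h
  simp_rw [h2]
  rw [← Finset.mul_sum]


lemma rad_sq {d : ℕ} (x : Fin d → ℝ) :
    ∑ ω : Fin d → Bool, (rad x ω) ^ 2 = 2 ^ d * ∑ k, (x k) ^ 2 := by
  have := rad_mul_rad x x
  simp_rw [← pow_two] at this
  exact this

lemma rad_four {d : ℕ} (x : Fin d → ℝ) :
    ∑ ω : Fin d → Bool, (rad x ω) ^ 4 ≤ 3 * 2 ^ d * (∑ k, (x k) ^ 2) ^ 2 := by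
  induction d with
  | zero =>
      simp [rad]
  | succ d ih =>
      set x' : Fin d → ℝ := fun k => x k.succ with hx'
      have key : ∀ (b : Bool) (ω : Fin d → Bool),
          rad x (Fin.cons b ω) = x 0 * Rb b + rad x' ω := by
        intro b ω
        rw [rad, Fin.sum_univ_succ]
        simp [rad, hx']
      have esum : ∑ ω : Fin (d+1) → Bool, (rad x ω) ^ 4
          = ∑ p : Bool × (Fin d → Bool), (rad x (Fin.cons p.1 p.2)) ^ 4 := by
        refine (Fintype.sum_equiv (Fin.consEquiv (fun _ : Fin (d+1) => Bool)) _ _ ?_).symm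
        intro p
        congr 1
      rw [esum, Fintype.sum_prod_type]
      simp_rw [key]
      have expand : ∀ (b : Bool) (A : ℝ),
          (x 0 * Rb b + A) ^ 4 + 0 = (x 0)^4 * (Rb b)^4 + 4*(x 0)^3*(Rb b)^3*A
            + 6*(x 0)^2*(Rb b)^2*A^2 + 4*(x 0)*(Rb b)*A^3 + A^4 := by
        intro b A; ring
      have sumBool : ∀ ω : Fin d → Bool,
          ∑ b : Bool, (x 0 * Rb b + rad x' ω) ^ 4
            = 2*(x 0)^4 + 12*(x 0)^2*(rad x' ω)^2 + 2*(rad x' ω)^4 := by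
        intro ω
        rw [Fintype.sum_bool]
        simp [Rb]
        ring
      rw [Finset.sum_comm]
      simp_rw [sumBool]
      have h4 := ih x'
      have h2 := rad_sq x'
      have hsum : ∑ ω : Fin d → Bool,
          (2*(x 0)^4 + 12*(x 0)^2*(rad x' ω)^2 + 2*(rad x' ω)^4)
          = 2^d * (2*(x 0)^4) + 12*(x 0)^2 * (2^d * ∑ k, (x' k)^2)
            + 2 * ∑ ω : Fin d → Bool, (rad x' ω)^4 := by
        rw [Finset.sum_add_distrib, Finset.sum_add_distrib, Finset.sum_const,
          Finset.card_univ, Fintype.card_fun, ← Finset.mul_sum, ← Finset.mul_sum, ← h2]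
        simp [mul_comm]
      rw [hsum]
      have hnorm : ∑ k : Fin (d+1), (x k)^2 = (x 0)^2 + ∑ k, (x' k)^2 := by
        rw [Fin.sum_univ_succ]
      rw [hnorm]
      have hpow : (2:ℝ) ^ (d+1) = 2 * 2^d := by ring
      rw [hpow]
      have hge : (0:ℝ) ≤ 2^d := by positivity
      nlinarith [h4, mul_nonneg hge (pow_nonneg (sq_nonneg (x 0)) 2)]
def clamp (M c : ℝ) : ℝ := max (-M) (min M c)

lemma abs_clamp_le {M : ℝ} (hM : 0 ≤ M) (c : ℝ) : |clamp M c| ≤ M := by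
  rw [abs_le]
  constructor
  · exact le_max_left _ _
  · exact max_le (by linarith) (min_le_left _ _)

lemma clamp_sq_le {M : ℝ} (hM : 0 ≤ M) (c : ℝ) : (clamp M c)^2 ≤ c^2 := by
  rcases le_total c (-M) with h | h
  · have h1 : min M c = c := min_eq_right (by linarith)
    have h2 : clamp M c = -M := by rw [clamp, h1]; exact max_eq_left h
    rw [h2]; nlinarith
  · rcases le_total M c with h' | h'
    · have h1 : min M c = M := min_eq_left h'
      have h2 : clamp M c = M := by rw [clamp, h1]; exact max_eq_right (by linarith)
      rw [h2]; nlinarith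
    · have h1 : min M c = c := min_eq_right h'
      have h2 : clamp M c = c := by rw [clamp, h1]; exact max_eq_right h
      rw [h2]

lemma tail_sq_le {M : ℝ} (hM : 0 < M) (c : ℝ) : (c - clamp M c)^2 ≤ c^4 / M^2 := by
  rw [le_div_iff₀ (by positivity)]
  rcases le_total c (-M) with h | h
  · have h2 : clamp M c = -M := by
      rw [clamp, min_eq_right (by linarith)]; exact max_eq_left h
    have hp : (0:ℝ) ≤ -M - c := by linarith
    rw [h2]
    nlinarith [hp, hM.le, mul_nonneg hp hM.le,
      mul_nonneg (mul_nonneg hp hp) (mul_nonneg hM.le hM.le),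
      mul_nonneg (mul_nonneg hp hM.le) (mul_nonneg hM.le hM.le),
      mul_nonneg (mul_nonneg hp hp) (mul_nonneg hp hM.le)]
  · rcases le_total M c with h' | h'
    · have h2 : clamp M c = M := by
        rw [clamp, min_eq_left h']; exact max_eq_right (by linarith)
      have hp : (0:ℝ) ≤ c - M := by linarith
      rw [h2]
      nlinarith [hp, hM.le, mul_nonneg hp hM.le,
        mul_nonneg (mul_nonneg hp hp) (mul_nonneg hM.le hM.le),
        mul_nonneg (mul_nonneg hp hM.le) (mul_nonneg hM.le hM.le),
        mul_nonneg (mul_nonneg hp hp) (mul_nonneg hp hM.le)]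
    · have h2 : clamp M c = c := by
        rw [clamp, min_eq_right h']; exact max_eq_right h
      rw [h2]; simp; positivity

open Finset in
def GSet (n m : ℕ) : Set ℝ :=
  { v | ∃ (d : ℕ) (a : Fin n → Fin m → ℝ) (x : Fin n → Fin d → ℝ) (y : Fin m → Fin d → ℝ),
      Hyp n m a ∧ (∀ i, ∑ k, x i k ^ 2 ≤ 1) ∧ (∀ j, ∑ k, y j k ^ 2 ≤ 1) ∧
      v = |∑ i, ∑ j, a i j * ∑ k, x i k * y j k| }

noncomputable def Gc (n m : ℕ) : ℝ := sSup (GSet n m)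

open Finset

lemma GSet_le (n m : ℕ) : ∀ v ∈ GSet n m, v ≤ (n : ℝ) * m := by
  rintro v ⟨d, a, x, y, ha, hx, hy, rfl⟩
  have haij : ∀ i j, |a i j| ≤ 1 := by
    intro i j
    have h := hypA ha (fun i' => if i' = i then 1 else 0) (fun j' => if j' = j then 1 else 0)
      (fun i' => by split <;> simp) (fun j' => by split <;> simp)
    have e : ∑ i', ∑ j', a i' j' * (if i' = i then (1:ℝ) else 0) * (if j' = j then (1:ℝ) else 0)
        = a i j := by
      rw [Finset.sum_eq_single i]
      · rw [Finset.sum_eq_single j]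
        · simp
        · intro j' _ hj'; simp [hj']
        · intro hj; exact absurd (Finset.mem_univ j) hj
      · intro i' _ hi'
        simp [hi']
      · intro hi; exact absurd (Finset.mem_univ i) hi
    rwa [e] at h
  have hinner : ∀ i j, |∑ k, x i k * y j k| ≤ 1 := by
    intro i j
    have h1 := Finset.sum_mul_sq_le_sq_mul_sq Finset.univ (x i) (y j)
    have h2 : (∑ k, x i k * y j k)^2 ≤ 1 := by
      calc (∑ k, x i k * y j k)^2 ≤ (∑ k, x i k ^2) * (∑ k, y j k^2) := h1
        _ ≤ 1 := by
            have hx1 := hx i; have hy1 := hy j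
            have hxn : 0 ≤ ∑ k, x i k ^2 := Finset.sum_nonneg fun k _ => sq_nonneg _
            have hyn : 0 ≤ ∑ k, y j k ^2 := Finset.sum_nonneg fun k _ => sq_nonneg _
            nlinarith
    nlinarith [abs_nonneg (∑ k, x i k * y j k), sq_abs (∑ k, x i k * y j k)]
  calc |∑ i, ∑ j, a i j * ∑ k, x i k * y j k|
      ≤ ∑ i, |∑ j, a i j * ∑ k, x i k * y j k| := Finset.abs_sum_le_sum_abs _ _
    _ ≤ ∑ i : Fin n, ∑ j : Fin m, |a i j * ∑ k, x i k * y j k| :=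
        Finset.sum_le_sum fun i _ => Finset.abs_sum_le_sum_abs _ _
    _ ≤ ∑ i : Fin n, ∑ j : Fin m, 1 := by
        refine Finset.sum_le_sum fun i _ => Finset.sum_le_sum fun j _ => ?_
        rw [abs_mul]
        exact mul_le_one₀ (haij i j) (abs_nonneg _) (hinner i j)
    _ = (n : ℝ) * m := by simp [mul_comm]

lemma GSet_bdd (n m : ℕ) : BddAbove (GSet n m) := ⟨(n:ℝ)*m, fun v hv => GSet_le n m v hv⟩

lemma Gc_nonneg (n m : ℕ) : 0 ≤ Gc n m :=
  Real.sSup_nonneg fun v hv => by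
    obtain ⟨d, a, x, y, _, _, _, rfl⟩ := hv; exact abs_nonneg _

lemma triple_swap {α β γ : Type*} [Fintype α] [Fintype β] [Fintype γ] (F : α → β → γ → ℝ) :
    ∑ i, ∑ j, ∑ k, F i j k = ∑ k, ∑ i, ∑ j, F i j k :=
  calc ∑ i, ∑ j, ∑ k, F i j k = ∑ i, ∑ k, ∑ j, F i j k :=
        Finset.sum_congr rfl fun i _ => Finset.sum_comm
    _ = ∑ k, ∑ i, ∑ j, F i j k := Finset.sum_comm

lemma tail_moment {d : ℕ} {M : ℝ} (hM : 0 < M) (x : Fin d → ℝ) (hx : ∑ k, (x k)^2 ≤ 1) :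
    ∑ ω : Fin d → Bool, (rad x ω - clamp M (rad x ω))^2 ≤ 3 * 2^d / M^2 := by
  have h1 : ∑ ω : Fin d → Bool, (rad x ω - clamp M (rad x ω))^2
      ≤ ∑ ω : Fin d → Bool, (rad x ω)^4 / M^2 :=
    Finset.sum_le_sum fun ω _ => tail_sq_le hM _
  have h2 : ∑ ω : Fin d → Bool, (rad x ω)^4 / M^2 = (∑ ω : Fin d → Bool, (rad x ω)^4) / M^2 :=
    (Finset.sum_div _ _ _).symm
  have h3 : (∑ ω : Fin d → Bool, (rad x ω)^4) ≤ 3 * 2^d := by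
    refine le_trans (rad_four x) ?_
    have hnn : 0 ≤ ∑ k, (x k)^2 := Finset.sum_nonneg fun k _ => sq_nonneg _
    have hsq : (∑ k, (x k)^2)^2 ≤ 1 := by nlinarith
    nlinarith [pow_pos (show (0:ℝ) < 2 by norm_num) d, mul_le_mul_of_nonneg_left hsq (show (0:ℝ) ≤ 3 * 2^d by positivity)]
  calc ∑ ω : Fin d → Bool, (rad x ω - clamp M (rad x ω))^2
      ≤ (∑ ω : Fin d → Bool, (rad x ω)^4) / M^2 := by rw [← h2]; exact h1
    _ ≤ 3 * 2^d / M^2 := by gcongr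


lemma cross_bound {n m : ℕ} {a : Fin n → Fin m → ℝ} (ha : Hyp n m a) {d : ℕ}
    (A : Fin n → (Fin d → Bool) → ℝ) (B : Fin m → (Fin d → Bool) → ℝ)
    {c1 c2 : ℝ} (hc1 : 0 < c1) (hc2 : 0 < c2)
    (hA : ∀ i, ∑ ω, (A i ω)^2 ≤ c1^2 * 2^d) (hB : ∀ j, ∑ ω, (B j ω)^2 ≤ c2^2 * 2^d) :
    |∑ i, ∑ j, a i j * (((2:ℝ)^d)⁻¹ * ∑ ω, A i ω * B j ω)| ≤ c1 * c2 * Gc n m := by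
  set N : ℝ := 2^d with hNdef
  have hN : 0 < N := by positivity
  have hsN : 0 < Real.sqrt N := Real.sqrt_pos.2 hN
  have hsN2 : Real.sqrt N ^ 2 = N := Real.sq_sqrt hN.le
  have hcard : Fintype.card (Fin d → Bool) = 2^d := by rw [Fintype.card_fun]; simp
  set e := Fintype.equivFinOfCardEq hcard with he
  set u : Fin n → Fin (2^d) → ℝ := fun i r => c1⁻¹ * (Real.sqrt N)⁻¹ * A i (e.symm r) with hu
  set w : Fin m → Fin (2^d) → ℝ := fun j r => c2⁻¹ * (Real.sqrt N)⁻¹ * B j (e.symm r) with hw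
  have hre : ∀ f : (Fin d → Bool) → ℝ, ∑ r, f (e.symm r) = ∑ ω, f ω :=
    fun f => Fintype.sum_equiv e.symm (fun r => f (e.symm r)) f fun r => rfl
  have hunorm : ∀ i, ∑ r, (u i r)^2 ≤ 1 := by
    intro i
    have h1 : ∀ r, (u i r)^2 = (c1^2)⁻¹ * N⁻¹ * (A i (e.symm r))^2 := by
      intro r
      rw [hu]
      rw [show ((fun i r => c1⁻¹ * (Real.sqrt N)⁻¹ * A i (e.symm r)) i r) = c1⁻¹ * (Real.sqrt N)⁻¹ * A i (e.symm r) from rfl]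
      rw [mul_pow, mul_pow, inv_pow, inv_pow, hsN2]
    simp_rw [h1]
    rw [← Finset.mul_sum, hre (fun ω => (A i ω)^2)]
    have hAi := hA i
    calc (c1^2)⁻¹ * N⁻¹ * ∑ ω, (A i ω)^2 ≤ (c1^2)⁻¹ * N⁻¹ * (c1^2 * N) := by
          apply mul_le_mul_of_nonneg_left _ (by positivity)
          rw [hNdef]; exact hAi
      _ = 1 := by field_simp
  have hwnorm : ∀ j, ∑ r, (w j r)^2 ≤ 1 := by
    intro j
    have h1 : ∀ r, (w j r)^2 = (c2^2)⁻¹ * N⁻¹ * (B j (e.symm r))^2 := by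
      intro r
      rw [hw]
      rw [show ((fun j r => c2⁻¹ * (Real.sqrt N)⁻¹ * B j (e.symm r)) j r) = c2⁻¹ * (Real.sqrt N)⁻¹ * B j (e.symm r) from rfl]
      rw [mul_pow, mul_pow, inv_pow, inv_pow, hsN2]
    simp_rw [h1]
    rw [← Finset.mul_sum, hre (fun ω => (B j ω)^2)]
    have hBj := hB j
    calc (c2^2)⁻¹ * N⁻¹ * ∑ ω, (B j ω)^2 ≤ (c2^2)⁻¹ * N⁻¹ * (c2^2 * N) := by
          apply mul_le_mul_of_nonneg_left _ (by positivity)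
          rw [hNdef]; exact hBj
      _ = 1 := by field_simp
  have hmem : |∑ i, ∑ j, a i j * ∑ r, u i r * w j r| ∈ GSet n m :=
    ⟨2^d, a, u, w, ha, hunorm, hwnorm, rfl⟩
  have hle : |∑ i, ∑ j, a i j * ∑ r, u i r * w j r| ≤ Gc n m := le_csSup (GSet_bdd n m) hmem
  have hsNsq : (Real.sqrt N)⁻¹ * (Real.sqrt N)⁻¹ = N⁻¹ := by
    rw [← mul_inv]
    congr 1
    nlinarith
  have hkey : ∀ i j, N⁻¹ * ∑ ω, A i ω * B j ω = (c1 * c2) * ∑ r, u i r * w j r := by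
    intro i j
    have h1 : ∀ r : Fin (2^d), u i r * w j r
        = (c1⁻¹ * c2⁻¹ * N⁻¹) * (A i (e.symm r) * B j (e.symm r)) := by
      intro r
      rw [hu, hw]
      show c1⁻¹ * (Real.sqrt N)⁻¹ * A i (e.symm r) * (c2⁻¹ * (Real.sqrt N)⁻¹ * B j (e.symm r)) = _
      rw [← hsNsq]; ring
    simp_rw [h1]
    rw [← Finset.mul_sum, hre (fun ω => A i ω * B j ω)]
    have hc : c1 * c2 * (c1⁻¹ * c2⁻¹ * N⁻¹) = N⁻¹ := by field_simp
    calc N⁻¹ * ∑ ω, A i ω * B j ω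
        = (c1 * c2 * (c1⁻¹ * c2⁻¹ * N⁻¹)) * ∑ ω, A i ω * B j ω := by rw [hc]
      _ = c1 * c2 * ((c1⁻¹ * c2⁻¹ * N⁻¹) * ∑ ω, A i ω * B j ω) := by ring
  have htot : ∑ i, ∑ j, a i j * (N⁻¹ * ∑ ω, A i ω * B j ω)
      = (c1 * c2) * ∑ i, ∑ j, a i j * ∑ r, u i r * w j r := by
    rw [Finset.mul_sum]
    refine Finset.sum_congr rfl fun i _ => ?_
    rw [Finset.mul_sum]
    refine Finset.sum_congr rfl fun j _ => ?_
    rw [hkey i j]; ring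
  rw [show (((2:ℝ)^d)⁻¹ : ℝ) = N⁻¹ from rfl] at *
  rw [htot, abs_mul, abs_of_pos (by positivity : (0:ℝ) < c1*c2)]
  exact mul_le_mul_of_nonneg_left hle (by positivity)

lemma bootstrap (n m : ℕ) : ∀ v ∈ GSet n m, v ≤ 48 + (1/2) * Gc n m := by
  rintro v ⟨d, a, x, y, ha, hx, hy, rfl⟩
  have h3 : (Real.sqrt 3)^2 = 3 := Real.sq_sqrt (by norm_num)
  have hs3 : 0 < Real.sqrt 3 := Real.sqrt_pos.2 (by norm_num)
  set M : ℝ := 4 * Real.sqrt 3 with hMdef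
  have hM : 0 < M := by positivity
  have hM2 : M^2 = 48 := by rw [hMdef]; nlinarith
  set N : ℝ := 2^d with hNdef
  have hN : 0 < N := by positivity
  have hsN : 0 < Real.sqrt N := Real.sqrt_pos.2 hN
  have hsN2 : (Real.sqrt N)^2 = N := Real.sq_sqrt hN.le
  set φ : Fin n → (Fin d → Bool) → ℝ := fun i => rad (x i) with hφ
  set ψ : Fin m → (Fin d → Bool) → ℝ := fun j => rad (y j) with hψ
  set φc : Fin n → (Fin d → Bool) → ℝ := fun i ω => clamp M (φ i ω) with hφc
  set ψc : Fin m → (Fin d → Bool) → ℝ := fun j ω => clamp M (ψ j ω) with hψc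
  set φt : Fin n → (Fin d → Bool) → ℝ := fun i ω => φ i ω - φc i ω with hφt
  set ψt : Fin m → (Fin d → Bool) → ℝ := fun j ω => ψ j ω - ψc j ω with hψt
  -- inner product identity
  have hid : ∀ i j, ∑ k, x i k * y j k = N⁻¹ * ∑ ω, φ i ω * ψ j ω := by
    intro i j
    rw [hφ, hψ]
    rw [rad_mul_rad (x i) (y j), ← hNdef]
    field_simp
  -- decomposition
  have hdec : ∀ i j (ω : Fin d → Bool),
      φ i ω * ψ j ω = φc i ω * ψc j ω + φt i ω * ψ j ω + φc i ω * ψt j ω := by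
    intro i j ω; rw [hφt, hψt]; ring
  set S1 : ℝ := ∑ i, ∑ j, a i j * (N⁻¹ * ∑ ω, φc i ω * ψc j ω) with hS1
  set S2 : ℝ := ∑ i, ∑ j, a i j * (N⁻¹ * ∑ ω, φt i ω * ψ j ω) with hS2
  set S3 : ℝ := ∑ i, ∑ j, a i j * (N⁻¹ * ∑ ω, φc i ω * ψt j ω) with hS3
  have hsplit : ∑ i, ∑ j, a i j * ∑ k, x i k * y j k = S1 + S2 + S3 := by
    rw [hS1, hS2, hS3, ← Finset.sum_add_distrib, ← Finset.sum_add_distrib]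
    refine Finset.sum_congr rfl fun i _ => ?_
    rw [← Finset.sum_add_distrib, ← Finset.sum_add_distrib]
    refine Finset.sum_congr rfl fun j _ => ?_
    rw [hid i j]
    have : ∑ ω, φ i ω * ψ j ω = (∑ ω, φc i ω * ψc j ω) + (∑ ω, φt i ω * ψ j ω)
        + (∑ ω, φc i ω * ψt j ω) := by
      rw [← Finset.sum_add_distrib, ← Finset.sum_add_distrib]
      exact Finset.sum_congr rfl fun ω _ => hdec i j ω
    rw [this]; ring
  -- bound S1
  have hS1bound : |S1| ≤ 48 := by
    have e1 : ∀ i j, a i j * (N⁻¹ * ∑ ω, φc i ω * ψc j ω)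
        = ∑ ω, N⁻¹ * (a i j * φc i ω * ψc j ω) := by
      intro i j
      rw [Finset.mul_sum, Finset.mul_sum]
      exact Finset.sum_congr rfl fun ω _ => by ring
    have e2 : S1 = ∑ ω, N⁻¹ * (∑ i, ∑ j, a i j * φc i ω * ψc j ω) := by
      rw [hS1]
      simp_rw [e1]
      rw [triple_swap]
      simp_rw [← Finset.mul_sum]
    rw [e2]
    have e3 : ∀ ω : Fin d → Bool, |∑ i, ∑ j, a i j * φc i ω * ψc j ω| ≤ M * M :=
      fun ω => hypB ha _ _ hM hM (fun i => abs_clamp_le hM.le _) (fun j => abs_clamp_le hM.le _)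
    calc |∑ ω, N⁻¹ * (∑ i, ∑ j, a i j * φc i ω * ψc j ω)|
        ≤ ∑ ω : Fin d → Bool, |N⁻¹ * (∑ i, ∑ j, a i j * φc i ω * ψc j ω)| :=
          Finset.abs_sum_le_sum_abs _ _
      _ ≤ ∑ ω : Fin d → Bool, N⁻¹ * (M * M) := by
          refine Finset.sum_le_sum fun ω _ => ?_
          rw [abs_mul, abs_of_pos (inv_pos.2 hN)]
          exact mul_le_mul_of_nonneg_left (e3 ω) (inv_pos.2 hN).le
      _ = N⁻¹ * N * (M * M) := by
          rw [Finset.sum_const, Finset.card_univ, Fintype.card_fun]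
          simp only [Fintype.card_bool, Fintype.card_fin, nsmul_eq_mul, hNdef]
          push_cast
          ring
      _ = 48 := by rw [inv_mul_cancel₀ hN.ne']; nlinarith
  -- tail and clamped moments
  have hφt2 : ∀ i, ∑ ω, (φt i ω)^2 ≤ (Real.sqrt 3 / M)^2 * 2^d := by
    intro i
    have h := tail_moment hM (x i) (hx i)
    have heq : (Real.sqrt 3 / M)^2 * 2^d = 3 * 2^d / M^2 := by
      rw [div_pow, h3]; ring
    rw [heq]
    exact h
  have hψt2 : ∀ j, ∑ ω, (ψt j ω)^2 ≤ (Real.sqrt 3 / M)^2 * 2^d := by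
    intro j
    have h := tail_moment hM (y j) (hy j)
    have heq : (Real.sqrt 3 / M)^2 * 2^d = 3 * 2^d / M^2 := by
      rw [div_pow, h3]; ring
    rw [heq]
    exact h
  have hψ2 : ∀ j, ∑ ω, (ψ j ω)^2 ≤ (1:ℝ)^2 * 2^d := by
    intro j
    rw [one_pow]
    rw [hψ]
    rw [rad_sq (y j)]
    nlinarith [hy j, pow_pos (show (0:ℝ) < 2 by norm_num) d]
  have hφc2 : ∀ i, ∑ ω, (φc i ω)^2 ≤ (1:ℝ)^2 * 2^d := by
    intro i
    rw [one_pow]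
    have h1 : ∑ ω, (φc i ω)^2 ≤ ∑ ω, (φ i ω)^2 :=
      Finset.sum_le_sum fun ω _ => clamp_sq_le hM.le _
    have h2 : ∑ ω, (φ i ω)^2 = 2^d * ∑ k, (x i k)^2 := rad_sq (x i)
    rw [h2] at h1
    refine h1.trans ?_
    nlinarith [hx i, pow_pos (show (0:ℝ) < 2 by norm_num) d]
  have hq : Real.sqrt 3 / M = 1/4 := by
    rw [hMdef]
    rw [div_eq_iff (by positivity)]
    nlinarith
  have hS2bound : |S2| ≤ 1/4 * Gc n m := by
    have h := cross_bound ha φt ψ (by rw [hq]; norm_num : (0:ℝ) < Real.sqrt 3 / M)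
      one_pos hφt2 hψ2
    rw [hq] at h
    calc |S2| = |∑ i, ∑ j, a i j * (((2:ℝ)^d)⁻¹ * ∑ ω, φt i ω * ψ j ω)| := by rw [hS2, hNdef]
      _ ≤ 1/4 * 1 * Gc n m := h
      _ = 1/4 * Gc n m := by ring
  have hS3bound : |S3| ≤ 1/4 * Gc n m := by
    have h := cross_bound ha φc ψt one_pos
      (by rw [hq]; norm_num : (0:ℝ) < Real.sqrt 3 / M) hφc2 hψt2
    rw [hq] at h
    calc |S3| = |∑ i, ∑ j, a i j * (((2:ℝ)^d)⁻¹ * ∑ ω, φc i ω * ψt j ω)| := by rw [hS3, hNdef]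
      _ ≤ 1 * (1/4) * Gc n m := h
      _ = 1/4 * Gc n m := by ring
  rw [hsplit]
  calc |S1 + S2 + S3| ≤ |S1 + S2| + |S3| := abs_add_le _ _
    _ ≤ |S1| + |S2| + |S3| := by linarith [abs_add_le S1 S2]
    _ ≤ 48 + (1/2) * Gc n m := by linarith



lemma Gc_le (n m : ℕ) : Gc n m ≤ 96 := by
  have h1 : Gc n m ≤ 48 + (1/2) * Gc n m :=
    Real.sSup_le (bootstrap n m) (by linarith [Gc_nonneg n m])
  linarith


open RealInnerProductSpace

theorem stmt_15 :
    ∃ K : ℝ, ∀ (H : Type) (_ : NormedAddCommGroup H) (_ : InnerProductSpace ℝ H)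
      (n m : ℕ) (a : Fin n → Fin m → ℝ),
      (∀ (s : Fin n → ℝ) (t : Fin m → ℝ), (∀ i, s i = 1 ∨ s i = -1) →
        (∀ j, t j = 1 ∨ t j = -1) →
        |∑ i, ∑ j, a i j * s i * t j| ≤ 1) →
      ∀ (x : Fin n → H) (y : Fin m → H), (∀ i, ‖x i‖ = 1) → (∀ j, ‖y j‖ = 1) →
        |∑ i, ∑ j, a i j * ⟪x i, y j⟫| ≤ K := by
  refine ⟨96, ?_⟩
  intro H _ _ n m a ha x y hx hy
  set F := Submodule.span ℝ (Set.range x ∪ Set.range y) with hF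
  haveI : FiniteDimensional ℝ F :=
    FiniteDimensional.span_of_finite ℝ ((Set.finite_range x).union (Set.finite_range y))
  set D := Module.finrank ℝ F with hD
  set b := stdOrthonormalBasis ℝ F with hb
  have hxF : ∀ i, x i ∈ F := fun i => Submodule.subset_span (Or.inl ⟨i, rfl⟩)
  have hyF : ∀ j, y j ∈ F := fun j => Submodule.subset_span (Or.inr ⟨j, rfl⟩)
  set x' : Fin n → Fin D → ℝ := fun i k => b.repr ⟨x i, hxF i⟩ k with hx'
  set y' : Fin m → Fin D → ℝ := fun j k => b.repr ⟨y j, hyF j⟩ k with hy'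
  have hinner : ∀ (u v : F), ∑ k, b.repr u k * b.repr v k = ⟪(u:H), (v:H)⟫ := by
    intro u v
    have h1 : ⟪b.repr u, b.repr v⟫ = ⟪u, v⟫ := b.repr.inner_map_map u v
    rw [← Submodule.coe_inner, ← h1, PiLp.inner_apply]
    simp [RCLike.inner_apply, starRingEnd_apply, star_trivial]
    exact Finset.sum_congr rfl fun _ _ => mul_comm _ _
  have hxnorm : ∀ i, ∑ k, (x' i k)^2 ≤ 1 := by
    intro i
    have h1 : ∑ k, (x' i k)^2 = ⟪x i, x i⟫ := by
      rw [← hinner ⟨x i, hxF i⟩ ⟨x i, hxF i⟩]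
      exact Finset.sum_congr rfl fun k _ => by rw [hx']; ring
    rw [h1, real_inner_self_eq_norm_sq, hx i]
    norm_num
  have hynorm : ∀ j, ∑ k, (y' j k)^2 ≤ 1 := by
    intro j
    have h1 : ∑ k, (y' j k)^2 = ⟪y j, y j⟫ := by
      rw [← hinner ⟨y j, hyF j⟩ ⟨y j, hyF j⟩]
      exact Finset.sum_congr rfl fun k _ => by rw [hy']; ring
    rw [h1, real_inner_self_eq_norm_sq, hy j]
    norm_num
  have hval : ∑ i, ∑ j, a i j * ⟪x i, y j⟫ = ∑ i, ∑ j, a i j * ∑ k, x' i k * y' j k := by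
    refine Finset.sum_congr rfl fun i _ => Finset.sum_congr rfl fun j _ => ?_
    rw [hinner ⟨x i, hxF i⟩ ⟨y j, hyF j⟩]
  have hmem : |∑ i, ∑ j, a i j * ∑ k, x' i k * y' j k| ∈ GSet n m :=
    ⟨D, a, x', y', ha, hxnorm, hynorm, rfl⟩
  calc |∑ i, ∑ j, a i j * ⟪x i, y j⟫|
      = |∑ i, ∑ j, a i j * ∑ k, x' i k * y' j k| := by rw [hval]
    _ ≤ Gc n m := le_csSup (GSet_bdd n m) hmem
    _ ≤ 96 := Gc_le n m

end
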